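/- Let p be an odd integer, 1 ≤ s,t ≤ p−1, and B = {0,1,…,t−1} ⊆ Z_p. Define the multiset M on Z: if 2t ≤ p−1, M consists of p−2t+1 copies of 0, two copies each of 1,…,t−1, and one copy of t; if 2t ≥ p+1, M consists of 2t−p+1 copies of 2t−p, two copies each of 2t−p+1,…,t−1, and one copy of t. Then there exists a subset A of Z_p with |A| = s and r(A,B,B) = r if and only if M contains a multi-subset of cardinality s whose elements sum to r. -/

import Mathlib

/-- The multiset M of Figure 1, as a multiset of integers. -/
noncomputable def multisetM (p t : ℕ) : Multiset ℤ :=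
  if 2 * t ≤ p - 1 then
    Multiset.replicate (p - 2 * t + 1) (0 : ℤ)
      + 2 • (Finset.Icc (1 : ℤ) ((t : ℤ) - 1)).val + {(t : ℤ)}
  else
    Multiset.replicate (2 * t - p + 1) (2 * (t : ℤ) - p)
      + 2 • (Finset.Icc (2 * (t : ℤ) - p + 1) ((t : ℤ) - 1)).val + {(t : ℤ)}

lemma exists_le_of_le_map' {α β : Type*} [DecidableEq α] [DecidableEq β] {f : α → β} :
    ∀ (N : Multiset β) (s : Multiset α), N ≤ s.map f → ∃ u, u ≤ s ∧ u.map f = N := by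
  intro N
  induction N using Multiset.induction_on with
  | empty => exact fun s _ => ⟨0, zero_le, rfl⟩
  | cons b N ih =>
    intro s h
    have hb : b ∈ s.map f := Multiset.mem_of_le h (Multiset.mem_cons_self b N)
    obtain ⟨a, ha, rfl⟩ := Multiset.mem_map.mp hb
    have hs : s = a ::ₘ s.erase a := (Multiset.cons_erase ha).symm
    have h2 : N ≤ (s.map f).erase (f a) := by
      have := Multiset.erase_le_erase (f a) h
      rwa [Multiset.erase_cons_head] at this
    rw [hs, Multiset.map_cons, Multiset.erase_cons_head] at h2
    obtain ⟨u, hu, hmu⟩ := ih _ h2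
    exact ⟨a ::ₘ u, by rw [hs]; exact Multiset.cons_le_cons a hu,
      by rw [Multiset.map_cons, hmu]⟩

lemma wval' {p t : ℕ} (hp : 0 < p) (ht2 : t ≤ p - 1) (k : ℕ) (hk : k < p) :
    ((Finset.range t).filter (fun n => (k + n) % p < t)).card = (t - k) + (t - (p - k)) := by
  have hset : (Finset.range t).filter (fun n => (k + n) % p < t)
      = Finset.range (t - k) ∪ Finset.Ico (p - k) t := by
    ext n
    simp only [Finset.mem_filter, Finset.mem_range, Finset.mem_union, Finset.mem_Ico]
    by_cases hn : n < t
    · by_cases h : p ≤ k + n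
      · have : (k + n) % p = k + n - p := by
          rw [Nat.mod_eq_sub_mod h, Nat.mod_eq_of_lt (by omega)]
        rw [this]; omega
      · rw [Nat.mod_eq_of_lt (by omega)]; omega
    · constructor
      · rintro ⟨h1, -⟩; omega
      · rintro (h1 | ⟨-, h1⟩) <;> omega
  rw [hset, Finset.card_union_of_disjoint (by
        rw [Finset.disjoint_left]
        intro n h1 h2
        simp only [Finset.mem_range] at h1
        simp only [Finset.mem_Ico] at h2
        omega),
    Finset.card_range, Nat.card_Ico]

lemma memB' {p t : ℕ} [NeZero p] (ht2 : t ≤ p - 1) (x : ZMod p) :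
    x ∈ (Finset.range t).image (fun n : ℕ => (n : ZMod p)) ↔ x.val < t := by
  have hp : 0 < p := Nat.pos_of_ne_zero (NeZero.ne p)
  simp only [Finset.mem_image, Finset.mem_range]
  constructor
  · rintro ⟨n, hn, rfl⟩
    rwa [ZMod.val_cast_of_lt (by omega)]
  · intro h
    exact ⟨x.val, h, ZMod.natCast_zmod_val x⟩

lemma castInj' {p t : ℕ} [NeZero p] (ht : t ≤ p) :
    Set.InjOn (fun n : ℕ => (n : ZMod p)) (Finset.range t) := by
  intro a ha b hb hab
  simp only [Finset.coe_range, Set.mem_Iio] at ha hb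
  have := congrArg ZMod.val hab
  rwa [ZMod.val_cast_of_lt (by omega), ZMod.val_cast_of_lt (by omega)] at this

lemma wvalZ' {p t : ℕ} [NeZero p] (ht2 : t ≤ p - 1) (a : ZMod p) :
    (((Finset.range t).image (fun n : ℕ => (n : ZMod p))).filter
        (fun b => a + b ∈ (Finset.range t).image (fun n : ℕ => (n : ZMod p)))).card
      = (t - a.val) + (t - (p - a.val)) := by
  have hp : 0 < p := Nat.pos_of_ne_zero (NeZero.ne p)
  rw [Finset.filter_image]
  rw [Finset.card_image_of_injOn (Set.InjOn.mono (Finset.filter_subset _ _) (castInj' (by omega)))]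
  have heq : ∀ n ∈ Finset.range t,
      (a + (n : ZMod p) ∈ (Finset.range t).image (fun n : ℕ => (n : ZMod p)))
        ↔ ((a.val + n) % p < t) := by
    intro n hn
    rw [memB' ht2]
    congr! 1
    rw [← ZMod.val_natCast]
    congr 1
    push_cast [ZMod.natCast_zmod_val]
    ring
  rw [Finset.filter_congr heq, wval' hp ht2 a.val (ZMod.val_lt a)]

lemma mapFib' {p t : ℕ} (hodd : Odd p) (ht1 : 1 ≤ t) (ht2 : t ≤ p - 1) :
    Multiset.map (fun k : ℕ => (((t - k) + (t - (p - k)) : ℕ) : ℤ)) (Finset.range p).val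
      = multisetM p t := by
  obtain ⟨m, hm⟩ := hodd
  have hp : 0 < p := by omega
  ext x
  rw [Multiset.count_map, multisetM]
  have hcard : ∀ (q : ℕ → Prop) [DecidablePred q],
      Multiset.card (Multiset.filter q (Finset.range p).val)
        = ((Finset.range p).filter q).card := fun q _ => rfl
  rw [hcard]
  split_ifs with hc
  · have hIcc : Multiset.count x (Finset.Icc (1:ℤ) ((t:ℤ)-1)).val
        = if 1 ≤ x ∧ x ≤ (t:ℤ)-1 then 1 else 0 := by
      rw [Multiset.count_eq_of_nodup (Finset.Icc _ _).nodup]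
      simp [Finset.mem_Icc]
    simp only [Multiset.count_add, Multiset.count_replicate, Multiset.count_nsmul,
      Multiset.count_singleton, hIcc]
    by_cases h0 : x = 0
    · subst h0
      have hfib : (Finset.range p).filter (fun k => (0:ℤ) = ↑((t-k)+(t-(p-k))))
          = Finset.Icc t (p-t) := by
        ext k
        simp only [Finset.mem_filter, Finset.mem_range, Finset.mem_Icc]
        omega
      rw [hfib, Nat.card_Icc]
      split_ifs <;> omega
    · by_cases hT : x = (t:ℤ)
      · subst hT
        have hfib : (Finset.range p).filter (fun k => ((t:ℕ):ℤ) = ↑((t-k)+(t-(p-k))))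
            = {0} := by
          ext k
          simp only [Finset.mem_filter, Finset.mem_range, Finset.mem_singleton]
          omega
        rw [hfib, Finset.card_singleton]
        split_ifs <;> omega
      · by_cases hmid : 1 ≤ x ∧ x ≤ (t:ℤ) - 1
        · lift x to ℕ using (by omega : (0:ℤ) ≤ x) with n
          have hfib : (Finset.range p).filter (fun k => ((n:ℕ):ℤ) = ↑((t-k)+(t-(p-k))))
              = {t - n, p + n - t} := by
            ext k
            simp only [Finset.mem_filter, Finset.mem_range, Finset.mem_insert,
              Finset.mem_singleton]
            omega
          rw [hfib, Finset.card_insert_of_notMem (by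
            simp only [Finset.mem_singleton]; omega), Finset.card_singleton]
          split_ifs <;> omega
        · have hfib : (Finset.range p).filter (fun k => x = ↑((t-k)+(t-(p-k)))) = ∅ := by
            rw [Finset.filter_eq_empty_iff]
            intro k hk
            simp only [Finset.mem_range] at hk
            omega
          rw [hfib, Finset.card_empty]
          split_ifs <;> omega
  · have hIcc : Multiset.count x (Finset.Icc (2*(t:ℤ)-p+1) ((t:ℤ)-1)).val
        = if 2*(t:ℤ)-p+1 ≤ x ∧ x ≤ (t:ℤ)-1 then 1 else 0 := by
      rw [Multiset.count_eq_of_nodup (Finset.Icc _ _).nodup]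
      simp [Finset.mem_Icc]
    simp only [Multiset.count_add, Multiset.count_replicate, Multiset.count_nsmul,
      Multiset.count_singleton, hIcc]
    by_cases h0 : x = 2*(t:ℤ)-p
    · subst h0
      have hfib : (Finset.range p).filter (fun k => 2*(t:ℤ)-p = ↑((t-k)+(t-(p-k))))
          = Finset.Icc (p-t) t := by
        ext k
        simp only [Finset.mem_filter, Finset.mem_range, Finset.mem_Icc]
        omega
      rw [hfib, Nat.card_Icc]
      split_ifs <;> omega
    · by_cases hT : x = (t:ℤ)
      · subst hT
        have hfib : (Finset.range p).filter (fun k => ((t:ℕ):ℤ) = ↑((t-k)+(t-(p-k))))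
            = {0} := by
          ext k
          simp only [Finset.mem_filter, Finset.mem_range, Finset.mem_singleton]
          omega
        rw [hfib, Finset.card_singleton]
        split_ifs <;> omega
      · by_cases hmid : 2*(t:ℤ)-p+1 ≤ x ∧ x ≤ (t:ℤ) - 1
        · lift x to ℕ using (by omega : (0:ℤ) ≤ x) with n
          have hfib : (Finset.range p).filter (fun k => ((n:ℕ):ℤ) = ↑((t-k)+(t-(p-k))))
              = {t - n, p + n - t} := by
            ext k
            simp only [Finset.mem_filter, Finset.mem_range, Finset.mem_insert,
              Finset.mem_singleton]
            omega
          rw [hfib, Finset.card_insert_of_notMem (by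
            simp only [Finset.mem_singleton]; omega), Finset.card_singleton]
          split_ifs <;> omega
        · have hfib : (Finset.range p).filter (fun k => x = ↑((t-k)+(t-(p-k)))) = ∅ := by
            rw [Finset.filter_eq_empty_iff]
            intro k hk
            simp only [Finset.mem_range] at hk
            omega
          rw [hfib, Finset.card_empty]
          split_ifs <;> omega

theorem stmt_14 {p : ℕ} [NeZero p] (hodd : Odd p) {s t : ℕ}
    (hs1 : 1 ≤ s) (hs2 : s ≤ p - 1) (ht1 : 1 ≤ t) (ht2 : t ≤ p - 1)
    (B : Finset (ZMod p)) (hB : B = (Finset.range t).image (fun n : ℕ => (n : ZMod p)))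
    (r : ℤ) :
    (∃ A : Finset (ZMod p), A.card = s ∧
        (((A ×ˢ B ×ˢ B).filter (fun x => x.2.2 = x.1 + x.2.1)).card : ℤ) = r)
      ↔ ∃ N : Multiset ℤ, N ≤ multisetM p t ∧ Multiset.card N = s ∧ N.sum = r := by
  have hp : 0 < p := Nat.pos_of_ne_zero (NeZero.ne p)
  subst hB
  set B : Finset (ZMod p) := (Finset.range t).image (fun n : ℕ => (n : ZMod p)) with hBdef
  set wz : ZMod p → ℤ := fun a => ((B.filter (fun b => a + b ∈ B)).card : ℤ) with hwz
  -- counting lemma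
  have hcount : ∀ A : Finset (ZMod p),
      (((A ×ˢ B ×ˢ B).filter (fun x => x.2.2 = x.1 + x.2.1)).card : ℤ) = ∑ a ∈ A, wz a := by
    intro A
    rw [Finset.card_filter]
    rw [Finset.sum_product]
    push_cast
    refine Finset.sum_congr rfl fun a _ => ?_
    rw [Finset.sum_product]
    rw [hwz]
    push_cast
    rw [Finset.card_filter]
    push_cast
    refine Finset.sum_congr rfl fun b _ => ?_
    simp [Finset.sum_ite_eq']
  -- the multiset identity
  have hmapw : Multiset.map wz Finset.univ.val = multisetM p t := by
    have huniv : (Finset.univ : Finset (ZMod p)) = (Finset.range p).image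
        (fun n : ℕ => (n : ZMod p)) := by
      ext x
      simp only [Finset.mem_univ, Finset.mem_image, Finset.mem_range, true_iff]
      exact ⟨x.val, ZMod.val_lt x, ZMod.natCast_zmod_val x⟩
    rw [huniv, Finset.image_val_of_injOn (castInj' le_rfl), Multiset.map_map]
    rw [← mapFib' hodd ht1 ht2]
    apply Multiset.map_congr rfl
    intro k hk
    rw [Finset.mem_val, Finset.mem_range] at hk
    simp only [Function.comp_apply, hwz]
    rw [wvalZ' ht2, ZMod.val_cast_of_lt hk]
  constructor
  · rintro ⟨A, hA, hr⟩
    refine ⟨Multiset.map wz A.val, ?_, ?_, ?_⟩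
    · rw [← hmapw]
      exact Multiset.map_le_map (Finset.val_le_iff.mpr (Finset.subset_univ A))
    · rw [Multiset.card_map]; exact hA
    · rw [← hr, hcount A, Finset.sum]
  · rintro ⟨N, hNle, hNcard, hNsum⟩
    rw [← hmapw] at hNle
    obtain ⟨u, hu, rfl⟩ := exists_le_of_le_map' N Finset.univ.val hNle
    have hnodup : u.Nodup := Multiset.nodup_of_le hu Finset.univ.nodup
    refine ⟨⟨u, hnodup⟩, ?_, ?_⟩
    · simpa [Finset.card] using by rw [← Multiset.card_map wz u, hNcard]
    · rw [hcount, Finset.sum, ← hNsum]
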